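/- (Critical states of the variance sum.) For a unit vector φ ∈ H, let W(φ) = Δ_φA² + Δ_φB² denote the sum of the variances of A and B in φ. If the unit vector ψ minimizes W over all unit vectors of H, i.e. W(ψ) ≤ W(φ) for every unit vector φ, then ψ is an eigenvector of (A − ⟨A⟩I)² + (B − ⟨B⟩I)² with eigenvalue ΔA² + ΔB², i.e. ((A − ⟨A⟩I)² + (B − ⟨B⟩I)²) ψ = (ΔA² + ΔB²) ψ, where ⟨A⟩, ⟨B⟩, ΔA², ΔB² are computed in ψ. -/
import Mathlib


open scoped ComplexInnerProductSpace BigOperators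

noncomputable section

variable {H : Type*} [NormedAddCommGroup H] [InnerProductSpace ℂ H]

/-- Expectation value ⟨A⟩ = Re ⟪ψ, A ψ⟫ of an operator in the state ψ. -/
def expVal (ψ : H) (A : H →ₗ[ℂ] H) : ℝ := (⟪ψ, A ψ⟫).re

/-- Variance ΔA² = ⟨A²⟩ − ⟨A⟩². -/
def varOf (ψ : H) (A : H →ₗ[ℂ] H) : ℝ := (⟪ψ, A (A ψ)⟫).re - (expVal ψ A) ^ 2

/-- Standard deviation ΔA = √(ΔA²). -/
def stdDev (ψ : H) (A : H →ₗ[ℂ] H) : ℝ := Real.sqrt (varOf ψ A)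

/-- The real number i⟨[A,B]⟩. -/
def commRe (ψ : H) (A B : H →ₗ[ℂ] H) : ℝ :=
  (Complex.I * ⟪ψ, (A ∘ₗ B - B ∘ₗ A) ψ⟫).re

/-- The projection Π = I − |ψ⟩⟨ψ|. -/
def projPerp (ψ : H) : H →ₗ[ℂ] H :=
  LinearMap.id - ((innerSL ℂ ψ).smulRight ψ).toLinearMap

/-- The deviation operator Ă = A − ⟨A⟩I. -/
def devOp (ψ : H) (A : H →ₗ[ℂ] H) : H →ₗ[ℂ] H :=
  A - (expVal ψ A : ℂ) • LinearMap.id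

/-- The operator C = −i[A,B]. -/
def opC (A B : H →ₗ[ℂ] H) : H →ₗ[ℂ] H := (-Complex.I) • (A ∘ₗ B - B ∘ₗ A)

/-- The operator F = ĂB̆ + B̆Ă. -/
def opF (ψ : H) (A B : H →ₗ[ℂ] H) : H →ₗ[ℂ] H :=
  devOp ψ A ∘ₗ devOp ψ B + devOp ψ B ∘ₗ devOp ψ A

lemma devOp_apply (ψ : H) (A : H →ₗ[ℂ] H) (x : H) :
    devOp ψ A x = A x - (expVal ψ A : ℂ) • x := by
  simp [devOp]

lemma devOp_isSymmetric (ψ : H) {A : H →ₗ[ℂ] H} (hA : A.IsSymmetric) :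
    (devOp ψ A).IsSymmetric := by
  intro x y
  simp only [devOp_apply, inner_sub_left, inner_sub_right, inner_smul_left, inner_smul_right,
    hA x y, Complex.conj_ofReal]

/-- Norm-squared of the deviation vector in terms of expectations. -/
lemma norm_devOp_sq {A : H →ₗ[ℂ] H} (hA : A.IsSymmetric) (ψ φ : H) (hφ : ‖φ‖ = 1) :
    ‖devOp ψ A φ‖ ^ 2 = varOf φ A + (expVal ψ A - expVal φ A) ^ 2 := by
  have h1 : ⟪A φ, A φ⟫ = ⟪φ, A (A φ)⟫ := hA φ (A φ)
  have h2 : (⟪A φ, φ⟫).re = expVal φ A := by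
    rw [← inner_conj_symm, Complex.conj_re]; rfl
  set a : ℝ := expVal ψ A with ha
  have : ‖devOp ψ A φ‖ ^ 2 = ‖A φ‖ ^ 2 - 2 * (⟪A φ, (a : ℂ) • φ⟫).re + ‖(a : ℂ) • φ‖ ^ 2 := by
    rw [devOp_apply]; exact @norm_sub_sq ℂ _ _ _ _ _ _
  rw [this]
  have hAφ : ‖A φ‖ ^ 2 = (⟪φ, A (A φ)⟫).re := by
    rw [← h1, ← @inner_self_eq_norm_sq ℂ]; rfl
  have hre : (⟪A φ, (a : ℂ) • φ⟫).re = a * expVal φ A := by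
    rw [inner_smul_right]
    simp [Complex.ofReal_re, h2, Complex.mul_re, Complex.ofReal_im]
  have hn : ‖(a : ℂ) • φ‖ ^ 2 = a ^ 2 := by
    rw [norm_smul, hφ, mul_one]
    rw [Complex.norm_real]
    exact sq_abs a
  rw [hAφ, hre, hn, varOf]
  ring

theorem critical_state_of_variance_sum
    {H : Type*} [NormedAddCommGroup H] [InnerProductSpace ℂ H] [FiniteDimensional ℂ H]
    (A B : H →ₗ[ℂ] H) (hA : A.IsSymmetric) (hB : B.IsSymmetric)
    (ψ : H) (hψ : ‖ψ‖ = 1)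
    (hmin : ∀ φ : H, ‖φ‖ = 1 → varOf ψ A + varOf ψ B ≤ varOf φ A + varOf φ B) :
    (devOp ψ A ∘ₗ devOp ψ A + devOp ψ B ∘ₗ devOp ψ B) ψ
      = ((varOf ψ A + varOf ψ B : ℝ) : ℂ) • ψ := by
  set Tl : H →ₗ[ℂ] H := devOp ψ A ∘ₗ devOp ψ A + devOp ψ B ∘ₗ devOp ψ B with hTl
  let T : H →L[ℂ] H := LinearMap.toContinuousLinearMap Tl
  have hTapp : ∀ x : H, T x = Tl x := fun x => rfl
  have hAs := devOp_isSymmetric ψ hA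
  have hBs := devOp_isSymmetric ψ hB
  have hTsym : Tl.IsSymmetric := by
    intro x y
    simp only [hTl, LinearMap.add_apply, LinearMap.comp_apply, inner_add_left, inner_add_right]
    rw [hAs (devOp ψ A x) y, hAs x (devOp ψ A y), hBs (devOp ψ B x) y, hBs x (devOp ψ B y)]
  have hSA : IsSelfAdjoint T := ContinuousLinearMap.isSelfAdjoint_iff_isSymmetric.mpr hTsym
  have hinner : ∀ x : H, ⟪Tl x, x⟫ = ⟪devOp ψ A x, devOp ψ A x⟫ + ⟪devOp ψ B x, devOp ψ B x⟫ := by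
    intro x
    simp only [hTl, LinearMap.add_apply, LinearMap.comp_apply, inner_add_left]
    rw [hAs (devOp ψ A x) x, hBs (devOp ψ B x) x]
  have hkey : ∀ x : H, T.reApplyInnerSelf x = ‖devOp ψ A x‖ ^ 2 + ‖devOp ψ B x‖ ^ 2 := by
    intro x
    rw [ContinuousLinearMap.reApplyInnerSelf_apply, hTapp, hinner]
    simp [inner_self_eq_norm_sq_to_K, ← Complex.ofReal_pow]
  have hAψ : ‖devOp ψ A ψ‖ ^ 2 = varOf ψ A := by
    rw [norm_devOp_sq hA ψ ψ hψ]; ring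
  have hBψ : ‖devOp ψ B ψ‖ ^ 2 = varOf ψ B := by
    rw [norm_devOp_sq hB ψ ψ hψ]; ring
  have hψval : T.reApplyInnerSelf ψ = varOf ψ A + varOf ψ B := by
    rw [hkey, hAψ, hBψ]
  have hMin : IsMinOn T.reApplyInnerSelf (Metric.sphere (0 : H) ‖ψ‖) ψ := by
    intro x hx
    have hx1 : ‖x‖ = 1 := by
      rw [Metric.mem_sphere, dist_zero_right] at hx
      rw [hx, hψ]
    have h1 : varOf x A ≤ ‖devOp ψ A x‖ ^ 2 := by
      rw [norm_devOp_sq hA ψ x hx1]; nlinarith [sq_nonneg (expVal ψ A - expVal x A)]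
    have h2 : varOf x B ≤ ‖devOp ψ B x‖ ^ 2 := by
      rw [norm_devOp_sq hB ψ x hx1]; nlinarith [sq_nonneg (expVal ψ B - expVal x B)]
    have := hmin x hx1
    simp only [Set.mem_setOf_eq, hψval, hkey x]
    linarith
  have hψ0 : ψ ≠ 0 := by
    intro h; rw [h, norm_zero] at hψ; norm_num at hψ
  obtain ⟨hmem, -⟩ := hSA.hasEigenvector_of_isMinOn hψ0 hMin
  rw [Module.End.mem_eigenspace_iff] at hmem
  set μ : ℂ := _ with hμ
  have hTlψ : Tl ψ = μ • ψ := hmem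
  have hψψ : ⟪ψ, ψ⟫ = 1 := by
    rw [@inner_self_eq_norm_sq_to_K ℂ, hψ]; norm_num
  have hμval : μ = ((varOf ψ A + varOf ψ B : ℝ) : ℂ) := by
    have h1 : ⟪ψ, Tl ψ⟫ = μ := by
      rw [hTlψ, inner_smul_right, hψψ, mul_one]
    rw [← h1, ← hTsym ψ ψ, hinner ψ]
    rw [@inner_self_eq_norm_sq_to_K ℂ, @inner_self_eq_norm_sq_to_K ℂ]
    norm_cast
    rw [hAψ, hBψ]
    exact rfl
  rw [hTlψ, hμval]
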